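/- Cayley's formula: the number of spanning trees of the complete graph on N+1 vertices is (N+1)^{N−1}. Equivalently, for the Laplacian 𝓛 of K_{N+1} (which is (N+1)I − J restricted appropriately), det(𝓛^{{y}}) = (N+1)^{N−1} for any vertex y. -/

import Mathlib

open Matrix BigOperators

/-- The principal submatrix of `M` obtained by deleting the rows and columns
indexed by the finite set `Δ`. -/
def mdel {V : Type*} [DecidableEq V] (M : Matrix V V ℝ) (Δ : Finset V) :
    Matrix {a // a ∉ Δ} {a // a ∉ Δ} ℝ :=
  M.submatrix Subtype.val Subtype.val


set_option linter.unusedSectionVars false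

open SimpleGraph Finset

namespace CayleyAux

open scoped Classical

variable {V : Type*} [Fintype V] [LinearOrder V] [Nonempty V]

/-- `T` is a tree with support exactly `S`. -/
def treeOn (S : Finset V) (T : SimpleGraph V) : Prop :=
  (∀ ⦃x y : V⦄, T.Adj x y → x ∈ S) ∧ T.IsAcyclic ∧ ∀ x ∈ S, ∀ y ∈ S, T.Reachable x y

noncomputable def pick (s : Finset V) : V :=
  if h : s.Nonempty then s.min' h else Classical.arbitrary V

noncomputable def pickMax (s : Finset V) : V :=
  if h : s.Nonempty then s.max' h else Classical.arbitrary V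

lemma pick_mem {s : Finset V} (h : s.Nonempty) : pick s ∈ s := by
  rw [pick, dif_pos h]; exact s.min'_mem h

lemma pickMax_mem {s : Finset V} (h : s.Nonempty) : pickMax s ∈ s := by
  rw [pickMax, dif_pos h]; exact s.max'_mem h

lemma pick_singleton (b : V) : pick {b} = b := by
  rw [pick, dif_pos ⟨b, Finset.mem_singleton_self b⟩]; exact Finset.min'_singleton b

lemma pick_ne_pickMax {s : Finset V} (h : 1 < s.card) : pick s ≠ pickMax s := by
  have hne : s.Nonempty := Finset.card_pos.mp (by omega)
  rw [pick, pickMax, dif_pos hne, dif_pos hne]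
  exact ne_of_lt (s.min'_lt_max'_of_card h)

/-- The neighborhood of `a`, as a `Finset` (with a fixed decidability instance). -/
noncomputable def nbhd (T : SimpleGraph V) (a : V) : Finset V :=
  Finset.univ.filter (fun y => T.Adj a y)

lemma mem_nbhd {T : SimpleGraph V} {a y : V} : y ∈ nbhd T a ↔ T.Adj a y := by
  simp [nbhd]

/-- Our own degree function, avoiding instance juggling. -/
noncomputable def deg (T : SimpleGraph V) (a : V) : ℕ := (nbhd T a).card

lemma deg_eq_degree (T : SimpleGraph V) (a : V) [inst : Fintype (T.neighborSet a)] :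
    @SimpleGraph.degree V T a inst = deg T a := by
  unfold deg
  have h : @SimpleGraph.neighborFinset V T a inst = nbhd T a := by
    ext y
    rw [mem_neighborFinset, mem_nbhd]
  rw [SimpleGraph.degree, h]

/-- Delete all edges incident to `a`. -/
def delV (T : SimpleGraph V) (a : V) : SimpleGraph V where
  Adj x y := T.Adj x y ∧ x ≠ a ∧ y ≠ a
  symm := ⟨fun x y h => ⟨h.1.symm, h.2.2, h.2.1⟩⟩
  loopless := ⟨fun x h => T.loopless.irrefl x h.1⟩

@[simp] lemma delV_adj {T : SimpleGraph V} {a x y : V} :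
    (delV T a).Adj x y ↔ T.Adj x y ∧ x ≠ a ∧ y ≠ a := Iff.rfl

lemma delV_le {T : SimpleGraph V} {a : V} : delV T a ≤ T := fun _ _ h => h.1

noncomputable def leafMin (S : Finset V) (T : SimpleGraph V) : V :=
  pick (S.filter (fun x => deg T x = 1))

noncomputable def nbr (T : SimpleGraph V) (a : V) : V := pick (nbhd T a)

noncomputable def prufer : ℕ → Finset V → SimpleGraph V → List V
  | 0, _, _ => []
  | (k+1), S, T => nbr T (leafMin S T) :: prufer k (S.erase (leafMin S T)) (delV T (leafMin S T))

noncomputable def decode : List V → Finset V → SimpleGraph V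
  | [], S => edge (pick S) (pickMax S)
  | b :: s, S =>
      decode s (S.erase (pick (S \ (b :: s).toFinset))) ⊔ edge (pick (S \ (b :: s).toFinset)) b

/-! ### Walk helper lemmas -/

lemma exists_adj_of_reachable {T : SimpleGraph V} {x y : V} (h : T.Reachable x y)
    (hxy : x ≠ y) : ∃ z, T.Adj x z := by
  obtain ⟨w⟩ := h
  cases w with
  | nil => exact absurd rfl hxy
  | cons h p => exact ⟨_, h⟩

lemma first_edge {T : SimpleGraph V} {a x : V} (q : T.Walk a x) (h : a ≠ x) :
    ∃ z, T.Adj a z ∧ s(a, z) ∈ q.edges := by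
  cases q with
  | nil => exact absurd rfl h
  | cons had p => exact ⟨_, had, by simp⟩

lemma end_neighbor {T : SimpleGraph V} {x a : V} (p : T.Walk x a) (hxa : x ≠ a) :
    ∃ z, T.Adj a z ∧ s(a, z) ∈ p.edges := by
  obtain ⟨z, hz, he⟩ := first_edge p.reverse (Ne.symm hxa)
  refine ⟨z, hz, ?_⟩
  rwa [Walk.edges_reverse, List.mem_reverse] at he

lemma two_neighbors_interior {T : SimpleGraph V} {x y a : V} {p : T.Walk x y}
    (hp : p.IsPath) (ha : a ∈ p.support) (hax : a ≠ x) (hay : a ≠ y) :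
    ∃ u w, u ≠ w ∧ T.Adj a u ∧ T.Adj a w := by
  obtain ⟨u, hu, hue⟩ := end_neighbor (p.takeUntil a ha) (Ne.symm hax)
  obtain ⟨w, hw, hwe⟩ := first_edge (p.dropUntil a ha) hay
  refine ⟨u, w, ?_, hu, hw⟩
  intro huw
  subst huw
  have hnodup : ((p.takeUntil a ha).edges ++ (p.dropUntil a ha).edges).Nodup := by
    rw [← Walk.edges_append, Walk.take_spec]
    exact hp.isTrail.edges_nodup
  exact (List.disjoint_of_nodup_append hnodup) hue hwe

lemma two_neighbors_cycle_at {T : SimpleGraph V} {a : V} (c : T.Walk a a) (hc : c.IsCycle) :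
    ∃ u w, u ≠ w ∧ T.Adj a u ∧ T.Adj a w := by
  cases c with
  | nil => exact absurd Walk.Nil.nil hc.not_nil
  | cons hadj p =>
    rw [Walk.cons_isCycle_iff] at hc
    obtain ⟨w, hw, hwe⟩ := end_neighbor p hadj.ne'
    refine ⟨_, w, fun h => ?_, hadj, hw⟩
    rw [← h] at hwe
    exact hc.2 hwe

lemma two_neighbors_cycle {T : SimpleGraph V} {v a : V} {c : T.Walk v v} (hc : c.IsCycle)
    (ha : a ∈ c.support) : ∃ u w, u ≠ w ∧ T.Adj a u ∧ T.Adj a w :=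
  two_neighbors_cycle_at (c.rotate a ha) (hc.rotate ha)

lemma two_le_deg {T : SimpleGraph V} {a u w : V} (h : T.Adj a u) (h' : T.Adj a w)
    (huw : u ≠ w) : 2 ≤ deg T a := by
  have hsub : ({u, w} : Finset V) ⊆ nbhd T a := by
    intro z hz
    rcases Finset.mem_insert.mp hz with rfl | hz
    · exact mem_nbhd.mpr h
    · rw [Finset.mem_singleton] at hz
      subst hz
      exact mem_nbhd.mpr h'
  calc 2 = ({u, w} : Finset V).card := (Finset.card_pair huw).symm
    _ ≤ (nbhd T a).card := Finset.card_le_card hsub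

/-! ### treeOn basic lemmas -/

lemma treeOn.one_le_deg {S : Finset V} {T : SimpleGraph V} (h : treeOn S T) {x : V}
    (hx : x ∈ S) (h2 : 2 ≤ S.card) : 0 < deg T x := by
  obtain ⟨y, hy, hyx⟩ := S.exists_mem_ne (by omega) x
  obtain ⟨z, hz⟩ := exists_adj_of_reachable (h.2.2 x hx y hy) (Ne.symm hyx)
  exact Finset.card_pos.mpr ⟨z, mem_nbhd.mpr hz⟩

lemma reachable_induce {T : SimpleGraph V} {S : Finset V}
    (h1 : ∀ ⦃x y : V⦄, T.Adj x y → x ∈ S) {x y : V} (w : T.Walk x y) :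
    ∀ (hx : x ∈ (S : Set V)) (hy : y ∈ (S : Set V)),
      (T.induce (S : Set V)).Reachable ⟨x, hx⟩ ⟨y, hy⟩ := by
  induction w with
  | nil => intro hx hy; exact Reachable.refl _
  | @cons x z y h p ih =>
    intro hx hy
    have hz : z ∈ (S : Set V) := by
      simpa using h1 h.symm
    have hadj : (T.induce (S : Set V)).Adj ⟨x, hx⟩ ⟨z, hz⟩ := h
    exact hadj.reachable.trans (ih hz hy)

lemma treeOn.isTree_induce {S : Finset V} {T : SimpleGraph V} (h : treeOn S T)
    (hS : S.Nonempty) : (T.induce (S : Set V)).IsTree := by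
  haveI : Nonempty (S : Set V) := ⟨⟨hS.choose, by simpa using hS.choose_spec⟩⟩
  constructor
  · apply Connected.mk
    rintro ⟨x, hx⟩ ⟨y, hy⟩
    obtain ⟨w⟩ := h.2.2 x (by simpa using hx) y (by simpa using hy)
    exact reachable_induce h.1 w hx hy
  · intro v c hc
    exact h.2.1 (c.map (Embedding.induce (G := T) (S : Set V)).toHom)
      (hc.map (Embedding.induce (G := T) (S : Set V)).injective)

lemma degree_induce {T : SimpleGraph V} {S : Finset V}
    (h1 : ∀ ⦃x y : V⦄, T.Adj x y → x ∈ S) (v : (S : Set V))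
    [inst : Fintype ((T.induce (S : Set V)).neighborSet v)] :
    @SimpleGraph.degree _ (T.induce (S : Set V)) v inst = deg T v.val := by
  rw [SimpleGraph.degree]
  refine Finset.card_bij' (fun u _ => u.val) (fun y hy => ⟨y, ?_⟩) ?_ ?_ ?_ ?_
  · rw [mem_nbhd] at hy
    simpa using h1 hy.symm
  · intro u hu
    rw [mem_neighborFinset] at hu
    rw [mem_nbhd]
    exact hu
  · intro y hy
    rw [mem_nbhd] at hy
    rw [mem_neighborFinset]
    exact hy
  · intro u hu; rfl
  · intro y hy; rfl

lemma treeOn.exists_leaf {S : Finset V} {T : SimpleGraph V} (h : treeOn S T)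
    (h2 : 2 ≤ S.card) : ∃ a ∈ S, deg T a = 1 := by
  have hS : S.Nonempty := Finset.card_pos.mp (by omega)
  have htree := h.isTree_induce hS
  have hcard : Fintype.card (S : Set V) = S.card := by simp
  have hE := htree.card_edgeFinset
  have hsum := (T.induce (S : Set V)).sum_degrees_eq_twice_card_edges
  by_contra hno
  push_neg at hno
  have hdeg2 : ∀ v : (S : Set V), 2 ≤ (T.induce (S : Set V)).degree v := by
    intro v
    have hp : 0 < deg T v.val := h.one_le_deg (by simpa using v.2) h2
    have hne := hno v.val (by simpa using v.2)
    have hi := degree_induce h.1 v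
    omega
  have hle : 2 * Fintype.card (S : Set V) ≤ ∑ v, (T.induce (S : Set V)).degree v := by
    calc 2 * Fintype.card (S : Set V) = ∑ _v : (S : Set V), 2 := by
          rw [Finset.sum_const, Finset.card_univ]; ring
      _ ≤ _ := Finset.sum_le_sum (fun v _ => hdeg2 v)
  rw [hsum] at hle
  omega

lemma nbhd_eq_singleton {T : SimpleGraph V} {a b : V} (hdeg : deg T a = 1)
    (hab : T.Adj a b) : nbhd T a = {b} := by
  obtain ⟨c, hc⟩ := Finset.card_eq_one.mp hdeg
  have hb : b ∈ nbhd T a := mem_nbhd.mpr hab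
  rw [hc, Finset.mem_singleton] at hb
  rw [hc, hb]

lemma adj_eq_of_leaf {T : SimpleGraph V} {a b : V} (hdeg : deg T a = 1)
    (hab : T.Adj a b) : ∀ x, T.Adj a x → x = b := by
  intro x hx
  have : x ∈ nbhd T a := mem_nbhd.mpr hx
  rwa [nbhd_eq_singleton hdeg hab, Finset.mem_singleton] at this

lemma delV_deg_of_not_adj {T : SimpleGraph V} {a x : V} (hxa : x ≠ a)
    (hna : ¬ T.Adj x a) : deg (delV T a) x = deg T x := by
  unfold deg
  congr 1
  ext y
  rw [mem_nbhd, mem_nbhd, delV_adj]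
  exact ⟨fun h => h.1, fun h => ⟨h, hxa, fun hy => hna (hy ▸ h)⟩⟩

lemma delV_deg_nbr {T : SimpleGraph V} {a b : V} (hab : T.Adj a b) :
    deg (delV T a) b + 1 = deg T b := by
  have hnb : nbhd (delV T a) b = (nbhd T b).erase a := by
    ext y
    rw [Finset.mem_erase, mem_nbhd, mem_nbhd, delV_adj]
    constructor
    · rintro ⟨h, _, hy⟩; exact ⟨hy, h⟩
    · rintro ⟨hy, h⟩; exact ⟨h, hab.ne', hy⟩
  have hmem : a ∈ nbhd T b := mem_nbhd.mpr hab.symm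
  have hpos : 0 < (nbhd T b).card := Finset.card_pos.mpr ⟨a, hmem⟩
  unfold deg
  rw [hnb, Finset.card_erase_of_mem hmem]
  omega

lemma treeOn.delV_treeOn {S : Finset V} {T : SimpleGraph V} (h : treeOn S T) {a : V}
    (hdeg : deg T a = 1) : treeOn (S.erase a) (delV T a) := by
  refine ⟨?_, ?_, ?_⟩
  · intro x y hxy
    exact Finset.mem_erase.mpr ⟨hxy.2.1, h.1 hxy.1⟩
  · intro v c hc
    exact h.2.1 (c.mapLe delV_le) (hc.mapLe delV_le)
  · intro x hx y hy
    rw [Finset.mem_erase] at hx hy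
    obtain ⟨p0⟩ := h.2.2 x hx.2 y hy.2
    set p : T.Walk x y := (p0.toPath : T.Path x y).val with hp_def
    have hpath : p.IsPath := p0.toPath.2
    have hap : a ∉ p.support := by
      intro ha
      obtain ⟨u, w, huw, hu, hw⟩ := two_neighbors_interior hpath ha
        (Ne.symm hx.1) (Ne.symm hy.1)
      have := two_le_deg hu hw huw
      omega
    have hedges : ∀ e ∈ p.edges, e ∈ (delV T a).edgeSet := by
      intro e he
      induction e with
      | _ u w =>
        have hadj : T.Adj u w := p.adj_of_mem_edges he
        have hu : u ∈ p.support := Walk.fst_mem_support_of_mem_edges _ he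
        have hw : w ∈ p.support := Walk.snd_mem_support_of_mem_edges _ he
        exact ⟨hadj, fun h' => hap (h' ▸ hu), fun h' => hap (h' ▸ hw)⟩
    exact ⟨p.transfer _ hedges⟩

lemma treeOn.eq_delV_sup_edge {S : Finset V} {T : SimpleGraph V} (_h : treeOn S T) {a b : V}
    (hdeg : deg T a = 1) (hab : T.Adj a b) : T = delV T a ⊔ edge a b := by
  ext x y
  rw [sup_adj, delV_adj, edge_adj]
  constructor
  · intro hxy
    by_cases hx : x = a
    · subst hx
      have : y = b := adj_eq_of_leaf hdeg hab y hxy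
      subst this
      exact Or.inr ⟨Or.inl ⟨rfl, rfl⟩, hxy.ne⟩
    · by_cases hy : y = a
      · subst hy
        have : x = b := adj_eq_of_leaf hdeg hab x hxy.symm
        subst this
        exact Or.inr ⟨Or.inr ⟨rfl, rfl⟩, hxy.ne⟩
      · exact Or.inl ⟨hxy, hx, hy⟩
  · rintro (⟨h, -, -⟩ | ⟨(⟨rfl, rfl⟩ | ⟨rfl, rfl⟩), -⟩)
    · exact h
    · exact hab
    · exact hab.symm

/-! ### sup edge lemmas (fresh pendant vertex) -/

section SupEdge

variable {T' : SimpleGraph V} {a b : V}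

lemma nbhd_sup_edge_self (hfresh : ∀ y, ¬ T'.Adj a y) (hne : a ≠ b) :
    nbhd (T' ⊔ edge a b) a = {b} := by
  ext y
  rw [mem_nbhd, Finset.mem_singleton, sup_adj, edge_adj]
  constructor
  · rintro (h | ⟨(⟨-, rfl⟩ | ⟨rfl, rfl⟩), hne'⟩)
    · exact absurd h (hfresh y)
    · rfl
    · exact absurd rfl hne'
  · rintro rfl
    exact Or.inr ⟨Or.inl ⟨rfl, rfl⟩, hne⟩

lemma deg_sup_edge_self (hfresh : ∀ y, ¬ T'.Adj a y) (hne : a ≠ b) :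
    deg (T' ⊔ edge a b) a = 1 := by
  unfold deg
  rw [nbhd_sup_edge_self hfresh hne, Finset.card_singleton]

lemma deg_sup_edge_right (hfresh : ∀ y, ¬ T'.Adj a y) (hne : a ≠ b) :
    deg (T' ⊔ edge a b) b = deg T' b + 1 := by
  have hnb : nbhd (T' ⊔ edge a b) b = insert a (nbhd T' b) := by
    ext y
    rw [mem_nbhd, Finset.mem_insert, mem_nbhd, sup_adj, edge_adj]
    constructor
    · rintro (h | ⟨(⟨rfl, -⟩ | ⟨-, rfl⟩), -⟩)
      · exact Or.inr h
      · exact absurd rfl hne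
      · exact Or.inl rfl
    · rintro (rfl | h)
      · exact Or.inr ⟨Or.inr ⟨rfl, rfl⟩, Ne.symm hne⟩
      · exact Or.inl h
  have hna : a ∉ nbhd T' b := by
    rw [mem_nbhd]
    exact fun h => hfresh b h.symm
  unfold deg
  rw [hnb, Finset.card_insert_of_notMem hna]

lemma deg_sup_edge_other {x : V} (hx : x ≠ a) (hxb : x ≠ b) :
    deg (T' ⊔ edge a b) x = deg T' x := by
  unfold deg
  congr 1
  ext y
  rw [mem_nbhd, mem_nbhd, sup_adj, edge_adj]
  constructor
  · rintro (h | ⟨(⟨rfl, -⟩ | ⟨rfl, -⟩), -⟩)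
    · exact h
    · exact absurd rfl hx
    · exact absurd rfl hxb
  · exact fun h => Or.inl h

lemma delV_sup_edge (hfresh : ∀ y, ¬ T'.Adj a y) :
    delV (T' ⊔ edge a b) a = T' := by
  ext x y
  rw [delV_adj, sup_adj, edge_adj]
  constructor
  · rintro ⟨(h | ⟨(⟨rfl, -⟩ | ⟨-, rfl⟩), -⟩), hx, hy⟩
    · exact h
    · exact absurd rfl hx
    · exact absurd rfl hy
  · intro h
    refine ⟨Or.inl h, fun hx => hfresh y (hx ▸ h), fun hy => hfresh x (hy ▸ h.symm)⟩

lemma sup_edge_acyclic (hfresh : ∀ y, ¬ T'.Adj a y) (hne : a ≠ b)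
    (hT' : T'.IsAcyclic) : (T' ⊔ edge a b).IsAcyclic := by
  intro v c hc
  by_cases ha : a ∈ c.support
  · obtain ⟨u, w, huw, hu, hw⟩ := two_neighbors_cycle hc ha
    have hb : ∀ z, (T' ⊔ edge a b).Adj a z → z = b := by
      intro z hz
      rw [sup_adj, edge_adj] at hz
      rcases hz with h | ⟨(⟨-, rfl⟩ | ⟨rfl, rfl⟩), hne'⟩
      · exact absurd h (hfresh z)
      · rfl
      · exact absurd rfl hne'
    exact huw ((hb u hu).trans (hb w hw).symm)
  · have hedges : ∀ e ∈ c.edges, e ∈ T'.edgeSet := by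
      intro e he
      induction e with
      | _ u w =>
        have hu : u ∈ c.support := Walk.fst_mem_support_of_mem_edges _ he
        have hw : w ∈ c.support := Walk.snd_mem_support_of_mem_edges _ he
        have hadj : (T' ⊔ edge a b).Adj u w := c.adj_of_mem_edges he
        rw [sup_adj, edge_adj] at hadj
        rcases hadj with h | ⟨(⟨rfl, -⟩ | ⟨-, rfl⟩), -⟩
        · exact h
        · exact absurd hu ha
        · exact absurd hw ha
    exact hT' (c.transfer T' hedges) (hc.transfer hedges)

end SupEdge

/-! ### base case helpers -/

lemma card_two_members {S : Finset V} (h2 : S.card = 2) :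
    S = {pick S, pickMax S} ∧ pick S ≠ pickMax S := by
  have hS : S.Nonempty := Finset.card_pos.mp (by omega)
  have hne : pick S ≠ pickMax S := pick_ne_pickMax (by omega)
  have hsub : ({pick S, pickMax S} : Finset V) ⊆ S := by
    intro z hz
    rcases Finset.mem_insert.mp hz with rfl | hz
    · exact pick_mem hS
    · rw [Finset.mem_singleton] at hz
      exact hz ▸ pickMax_mem hS
  have heq : ({pick S, pickMax S} : Finset V) = S :=
    Finset.eq_of_subset_of_card_le hsub (by rw [h2, Finset.card_pair hne])
  exact ⟨heq.symm, hne⟩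

lemma edge_nbhd_left {x y : V} (hxy : x ≠ y) : nbhd (edge x y) x = {y} := by
  ext z
  rw [mem_nbhd, Finset.mem_singleton, edge_adj]
  constructor
  · rintro ⟨(⟨-, rfl⟩ | ⟨rfl, rfl⟩), hne⟩
    · rfl
    · exact absurd rfl hne
  · rintro rfl
    exact ⟨Or.inl ⟨rfl, rfl⟩, hxy⟩

lemma edge_nbhd_right {x y : V} (hxy : x ≠ y) : nbhd (edge x y) y = {x} := by
  ext z
  rw [mem_nbhd, Finset.mem_singleton, edge_adj]
  constructor
  · rintro ⟨(⟨h1, rfl⟩ | ⟨-, rfl⟩), hne⟩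
    · exact absurd h1.symm hxy
    · rfl
  · rintro rfl
    exact ⟨Or.inr ⟨rfl, rfl⟩, Ne.symm hxy⟩

lemma edge_isAcyclic {x y : V} (hxy : x ≠ y) : (edge x y).IsAcyclic := by
  intro v c hc
  obtain ⟨u, w, huw, hu, hw⟩ := two_neighbors_cycle hc c.start_mem_support
  rw [edge_adj] at hu hw
  rcases hu.1 with ⟨rfl, rfl⟩ | ⟨rfl, rfl⟩
  · rcases hw.1 with ⟨-, rfl⟩ | ⟨h1, rfl⟩
    · exact huw rfl
    · exact hxy h1
  · rcases hw.1 with ⟨h1, rfl⟩ | ⟨-, rfl⟩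
    · exact hxy h1.symm
    · exact huw rfl

lemma treeOn_edge {S : Finset V} {x y : V} (hx : x ∈ S) (hy : y ∈ S) (hxy : x ≠ y)
    (hS : ∀ z ∈ S, z = x ∨ z = y) : treeOn S (edge x y) := by
  have hadj : (edge x y).Adj x y := by
    rw [edge_adj]
    exact ⟨Or.inl ⟨rfl, rfl⟩, hxy⟩
  refine ⟨?_, edge_isAcyclic hxy, ?_⟩
  · intro u v huv
    rw [edge_adj] at huv
    rcases huv.1 with ⟨rfl, rfl⟩ | ⟨rfl, rfl⟩
    · exact hx
    · exact hy
  · intro u hu v hv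
    rcases hS u hu with rfl | rfl <;> rcases hS v hv with rfl | rfl
    · exact Reachable.refl _
    · exact hadj.reachable
    · exact hadj.symm.reachable
    · exact Reachable.refl _

lemma treeOn_two {S : Finset V} {T : SimpleGraph V} (h : treeOn S T) (h2 : S.card = 2) :
    T = edge (pick S) (pickMax S) ∧ ∀ x ∈ S, deg T x = 1 := by
  obtain ⟨hSeq, hxy⟩ := card_two_members h2
  set x := pick S
  set y := pickMax S
  have hxS : x ∈ S := hSeq ▸ Finset.mem_insert_self x {y}
  have hyS : y ∈ S := hSeq ▸ Finset.mem_insert_of_mem (Finset.mem_singleton_self y)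
  have hmem : ∀ z ∈ S, z = x ∨ z = y := by
    intro z hz
    rw [hSeq] at hz
    simpa using hz
  have hadj : T.Adj x y := by
    obtain ⟨z, hz⟩ := exists_adj_of_reachable (h.2.2 x hxS y hyS) hxy
    have hzS : z ∈ S := h.1 hz.symm
    rcases hmem z hzS with rfl | rfl
    · exact absurd rfl hz.ne'
    · exact hz
  have hT : T = edge x y := by
    ext u v
    rw [edge_adj]
    constructor
    · intro huv
      have hu : u ∈ S := h.1 huv
      have hv : v ∈ S := h.1 huv.symm
      rcases hmem u hu with rfl | rfl <;> rcases hmem v hv with rfl | rfl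
      · exact absurd rfl huv.ne
      · exact ⟨Or.inl ⟨rfl, rfl⟩, huv.ne⟩
      · exact ⟨Or.inr ⟨rfl, rfl⟩, huv.ne⟩
      · exact absurd rfl huv.ne
    · rintro ⟨(⟨rfl, rfl⟩ | ⟨rfl, rfl⟩), -⟩
      · exact hadj
      · exact hadj.symm
  refine ⟨hT, ?_⟩
  intro z hz
  rcases hmem z hz with rfl | rfl
  · rw [hT]
    unfold deg
    rw [edge_nbhd_left hxy, Finset.card_singleton]
  · rw [hT]
    unfold deg
    rw [edge_nbhd_right hxy, Finset.card_singleton]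

/-! ### The Prüfer correspondence -/

theorem prufer_spec : ∀ (k : ℕ) (S : Finset V) (T : SimpleGraph V), treeOn S T →
    S.card = k + 2 →
    (prufer k S T).length = k ∧ (∀ x ∈ prufer k S T, x ∈ S) ∧
    (∀ x ∈ S, (x ∈ prufer k S T ↔ deg T x ≠ 1)) ∧
    decode (prufer k S T) S = T := by
  intro k
  induction k with
  | zero =>
    intro S T hT h2
    obtain ⟨hTeq, hdeg⟩ := treeOn_two hT h2
    refine ⟨rfl, by simp [prufer], ?_, ?_⟩
    · intro x hx
      simp [prufer, hdeg x hx]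
    · show decode [] S = T
      rw [decode]
      exact hTeq.symm
  | succ k ih =>
    intro S T hT h2
    obtain ⟨a0, ha0S, ha0⟩ := hT.exists_leaf (by omega)
    have hfilter : (S.filter (fun x => deg T x = 1)).Nonempty :=
      ⟨a0, Finset.mem_filter.mpr ⟨ha0S, ha0⟩⟩
    have haf : leafMin S T ∈ S.filter (fun x => deg T x = 1) := pick_mem hfilter
    set a := leafMin S T with ha_def
    have haS : a ∈ S := (Finset.mem_filter.mp haf).1
    have hadeg : deg T a = 1 := (Finset.mem_filter.mp haf).2
    have hnbne : (nbhd T a).Nonempty := by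
      refine Finset.card_pos.mp ?_
      have h1 := hadeg
      unfold deg at h1
      omega
    have hab : T.Adj a (nbr T a) := mem_nbhd.mp (pick_mem hnbne)
    set b := nbr T a with hb_def
    have hbS : b ∈ S := hT.1 hab.symm
    have hba : b ≠ a := hab.ne'
    have hS' : (S.erase a).card = k + 2 := by
      rw [Finset.card_erase_of_mem haS]; omega
    have hT' : treeOn (S.erase a) (delV T a) := hT.delV_treeOn hadeg
    obtain ⟨ihlen, ihmem, ihdeg, ihdec⟩ := ih (S.erase a) (delV T a) hT' hS'
    have honly : ∀ z, T.Adj a z → z = b := adj_eq_of_leaf hadeg hab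
    have hpruf : prufer (k+1) S T = b :: prufer k (S.erase a) (delV T a) := by
      rw [prufer]
    have hiff : ∀ x ∈ S, (x ∈ prufer (k+1) S T ↔ deg T x ≠ 1) := by
      intro x hxS
      rw [hpruf, List.mem_cons]
      by_cases hxa : x = a
      · subst hxa
        constructor
        · rintro (hh | hmem)
          · exact absurd hh.symm hba
          · exact absurd (Finset.mem_erase.mp (ihmem _ hmem)).1 (not_not.mpr rfl)
        · intro hne
          exact absurd hadeg hne
      · by_cases hxb : x = b
        · subst hxb
          refine iff_of_true (Or.inl rfl) ?_
          have hd := delV_deg_nbr (a := a) hab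
          have hpos : 0 < deg (delV T a) b :=
            hT'.one_le_deg (Finset.mem_erase.mpr ⟨hba, hbS⟩) (by omega)
          omega
        · rw [or_iff_right hxb, ihdeg x (Finset.mem_erase.mpr ⟨hxa, hxS⟩),
            delV_deg_of_not_adj hxa (fun hadj => hxb (honly x hadj.symm))]
    refine ⟨?_, ?_, hiff, ?_⟩
    · rw [hpruf]
      simp [ihlen]
    · intro x hx
      rw [hpruf, List.mem_cons] at hx
      rcases hx with rfl | hx
      · exact hbS
      · exact (Finset.mem_erase.mp (ihmem x hx)).2
    · -- decode
      have hsd : S \ (b :: prufer k (S.erase a) (delV T a)).toFinset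
          = S.filter (fun x => deg T x = 1) := by
        ext x
        rw [Finset.mem_sdiff, Finset.mem_filter, List.mem_toFinset]
        constructor
        · rintro ⟨hxS, hnot⟩
          refine ⟨hxS, ?_⟩
          have := (hiff x hxS).not.mp (by rwa [hpruf])
          exact not_not.mp this
        · rintro ⟨hxS, hdeg1⟩
          refine ⟨hxS, ?_⟩
          rw [← hpruf]
          exact fun hmem => ((hiff x hxS).mp hmem) hdeg1
      rw [hpruf, decode, hsd]
      show decode (prufer k (S.erase a) (delV T a)) (S.erase (leafMin S T)) ⊔
          edge (leafMin S T) b = T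
      rw [← ha_def, ihdec]
      exact (hT.eq_delV_sup_edge hadeg hab).symm

theorem decode_spec : ∀ (k : ℕ) (S : Finset V) (s : List V), s.length = k →
    (∀ x ∈ s, x ∈ S) → S.card = k + 2 →
    treeOn S (decode s S) ∧ (∀ x ∈ S, (deg (decode s S) x = 1 ↔ x ∉ s)) ∧
    prufer k S (decode s S) = s := by
  intro k
  induction k with
  | zero =>
    intro S s hlen hmem h2
    have hs : s = [] := List.eq_nil_of_length_eq_zero hlen
    subst hs
    obtain ⟨hSeq, hxy⟩ := card_two_members h2
    have hS : S.Nonempty := Finset.card_pos.mp (by omega)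
    have hdec : decode [] S = edge (pick S) (pickMax S) := by rw [decode]
    have hmemS : ∀ z ∈ S, z = pick S ∨ z = pickMax S := by
      intro z hz
      rw [hSeq] at hz
      simpa using hz
    have htree : treeOn S (edge (pick S) (pickMax S)) :=
      treeOn_edge (pick_mem hS) (pickMax_mem hS) hxy hmemS
    refine ⟨by rw [hdec]; exact htree, ?_, by rw [prufer]⟩
    intro z hz
    rw [hdec]
    refine iff_of_true ?_ (by simp)
    rcases hmemS z hz with rfl | rfl
    · unfold deg
      rw [edge_nbhd_left hxy, Finset.card_singleton]
    · unfold deg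
      rw [edge_nbhd_right hxy, Finset.card_singleton]
  | succ k ih =>
    intro S s hlen hmem h2
    obtain ⟨b, rest, rfl⟩ : ∃ b rest, s = b :: rest := by
      cases s with
      | nil => simp at hlen
      | cons b rest => exact ⟨b, rest, rfl⟩
    have hbS : b ∈ S := hmem b List.mem_cons_self
    have hsd : (S \ (b :: rest).toFinset).Nonempty := by
      rw [Finset.sdiff_nonempty]
      intro hsub
      have h1 := Finset.card_le_card hsub
      have h2' := (b :: rest).toFinset_card_le
      rw [hlen] at h2'
      omega
    have haIn := pick_mem hsd
    rw [Finset.mem_sdiff, List.mem_toFinset, List.mem_cons] at haIn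
    obtain ⟨haS, hanot⟩ := haIn
    push_neg at hanot
    obtain ⟨hab, harest⟩ := hanot
    set a := pick (S \ (b :: rest).toFinset) with ha_def
    have hS' : (S.erase a).card = k + 2 := by
      rw [Finset.card_erase_of_mem haS]; omega
    have hmem' : ∀ x ∈ rest, x ∈ S.erase a :=
      fun x hx => Finset.mem_erase.mpr
        ⟨fun h => harest (h ▸ hx), hmem x (List.mem_cons_of_mem b hx)⟩
    obtain ⟨hT', hdeg', henc⟩ := ih (S.erase a) rest (by simpa using hlen) hmem' hS'
    set T' := decode rest (S.erase a) with hT'_def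
    have hfresh : ∀ y, ¬ T'.Adj a y := fun y h => (Finset.mem_erase.mp (hT'.1 h)).1 rfl
    have hdec : decode (b :: rest) S = T' ⊔ edge a b := by rw [decode]
    have hba : b ≠ a := fun h => hab h.symm
    have hbS' : b ∈ S.erase a := Finset.mem_erase.mpr ⟨hba, hbS⟩
    have hadjab : (T' ⊔ edge a b).Adj a b := by
      rw [sup_adj, edge_adj]
      exact Or.inr ⟨Or.inl ⟨rfl, rfl⟩, hab⟩
    have hTtree : treeOn S (T' ⊔ edge a b) := by
      refine ⟨?_, sup_edge_acyclic hfresh hab hT'.2.1, ?_⟩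
      · intro x y hxy
        rw [sup_adj, edge_adj] at hxy
        rcases hxy with h | ⟨(⟨rfl, -⟩ | ⟨rfl, -⟩), -⟩
        · exact (Finset.erase_subset a S) (hT'.1 h)
        · exact haS
        · exact hbS
      · intro x hx y hy
        have key : ∀ z ∈ S, (T' ⊔ edge a b).Reachable z b := by
          intro z hz
          by_cases hza : z = a
          · subst hza
            exact hadjab.reachable
          · exact ((hT'.2.2 z (Finset.mem_erase.mpr ⟨hza, hz⟩) b hbS').mono le_sup_left)
        exact (key x hx).trans (key y hy).symm
    have hdegs : ∀ x ∈ S, (deg (T' ⊔ edge a b) x = 1 ↔ x ∉ b :: rest) := by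
      intro x hxS
      by_cases hxa : x = a
      · subst hxa
        refine iff_of_true (deg_sup_edge_self hfresh hab) ?_
        rw [List.mem_cons]
        rintro (hh | h)
        · exact hab hh
        · exact harest h
      · by_cases hxb : x = b
        · subst hxb
          have hd := deg_sup_edge_right hfresh hab
          have hpos : 0 < deg T' x := hT'.one_le_deg hbS' (by omega)
          refine iff_of_false (by omega) ?_
          exact not_not_intro List.mem_cons_self
        · rw [deg_sup_edge_other hxa hxb,
            hdeg' x (Finset.mem_erase.mpr ⟨hxa, hxS⟩), List.mem_cons]
          constructor
          · intro h hmem2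
            rcases hmem2 with rfl | hm
            · exact hxb rfl
            · exact h hm
          · intro h hm
            exact h (Or.inr hm)
    refine ⟨by rw [hdec]; exact hTtree, by rw [hdec]; exact hdegs, ?_⟩
    have hfilter_eq : S.filter (fun x => deg (T' ⊔ edge a b) x = 1)
        = S \ (b :: rest).toFinset := by
      ext x
      rw [Finset.mem_filter, Finset.mem_sdiff, List.mem_toFinset]
      constructor
      · rintro ⟨hxS, hd⟩
        exact ⟨hxS, (hdegs x hxS).mp hd⟩
      · rintro ⟨hxS, hnm⟩
        exact ⟨hxS, (hdegs x hxS).mpr hnm⟩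
    have hleafmin : leafMin S (T' ⊔ edge a b) = a := by
      rw [leafMin, hfilter_eq, ← ha_def]
    have hnb : nbhd (T' ⊔ edge a b) a = {b} := nbhd_sup_edge_self hfresh hab
    have hnbr : nbr (T' ⊔ edge a b) a = b := by
      rw [nbr, hnb]
      exact pick_singleton b
    have hdelV : delV (T' ⊔ edge a b) a = T' := delV_sup_edge hfresh
    rw [hdec, prufer, hleafmin, hnbr, hdelV, henc]

/-! ### Counting -/

theorem card_trees (V : Type*) [Fintype V] [LinearOrder V] [Nonempty V]
    (h2 : 2 ≤ Fintype.card V) :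
    Nat.card {T : SimpleGraph V // T.IsTree} = Fintype.card V ^ (Fintype.card V - 2) := by
  classical
  have hcard : (Finset.univ : Finset V).card = (Fintype.card V - 2) + 2 := by
    rw [Finset.card_univ]; omega
  have htreeOn : ∀ T : SimpleGraph V, T.IsTree ↔ treeOn Finset.univ T := by
    intro T
    constructor
    · intro h
      exact ⟨fun x y _ => Finset.mem_univ x, h.IsAcyclic,
        fun x _ y _ => h.isConnected.preconnected x y⟩
    · intro h
      exact ⟨Connected.mk (fun x y => h.2.2 x (Finset.mem_univ x) y (Finset.mem_univ y)), h.2.1⟩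
  have e : {T : SimpleGraph V // T.IsTree} ≃ {s : List V // s.length = Fintype.card V - 2} :=
  { toFun := fun T => ⟨prufer (Fintype.card V - 2) Finset.univ T.1,
      (prufer_spec _ _ _ ((htreeOn _).mp T.2) hcard).1⟩
    invFun := fun s => ⟨decode s.1 Finset.univ,
      (htreeOn _).mpr (decode_spec _ Finset.univ s.1 s.2 (fun x _ => Finset.mem_univ x) hcard).1⟩
    left_inv := fun T => Subtype.ext
      (prufer_spec _ _ _ ((htreeOn _).mp T.2) hcard).2.2.2
    right_inv := fun s => Subtype.ext
      (decode_spec _ Finset.univ s.1 s.2 (fun x _ => Finset.mem_univ x) hcard).2.2 }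
  have e2 : {s : List V // s.length = Fintype.card V - 2} ≃ (Fin (Fintype.card V - 2) → V) :=
    Equiv.vectorEquivFin V _
  rw [Nat.card_congr (e.trans e2), Nat.card_eq_fintype_card, Fintype.card_fun,
    Fintype.card_fin]

theorem card_spanning (V : Type*) :
    Nat.card {H : (⊤ : SimpleGraph V).Subgraph // H.IsSpanning ∧ H.spanningCoe.IsTree}
      = Nat.card {T : SimpleGraph V // T.IsTree} := by
  apply Nat.card_congr
  have hcoe : ∀ (T : SimpleGraph V) (h : T ≤ ⊤),
      (SimpleGraph.toSubgraph T h).spanningCoe = T := fun T h => rfl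
  refine ⟨fun H => ⟨H.1.spanningCoe, H.2.2⟩,
    fun T => ⟨SimpleGraph.toSubgraph T.1 le_top, SimpleGraph.toSubgraph.isSpanning _ _,
      by rw [hcoe]; exact T.2⟩, ?_, ?_⟩
  · rintro ⟨H, hsp, htree⟩
    refine Subtype.ext ?_
    apply SimpleGraph.Subgraph.ext
    · exact (Set.eq_univ_of_forall hsp).symm
    · rfl
  · rintro ⟨T, htree⟩
    exact Subtype.ext rfl

theorem card_one : Nat.card {T : SimpleGraph (Fin 1) // T.IsTree} = 1 := by
  have hbot : ∀ T : SimpleGraph (Fin 1), T = ⊥ := by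
    intro T
    ext x y
    exact ⟨fun h => absurd (Subsingleton.elim x y) h.ne, False.elim⟩
  have hbtree : (⊥ : SimpleGraph (Fin 1)).IsTree := by
    constructor
    · refine Connected.mk ?_
      intro x y
      rw [Subsingleton.elim x y]
    · exact isAcyclic_bot
  haveI : Unique {T : SimpleGraph (Fin 1) // T.IsTree} :=
    { default := ⟨⊥, hbtree⟩
      uniq := fun T => Subtype.ext (hbot T.1) }
  exact Nat.card_unique

end CayleyAux

theorem detpart (N : ℕ) (y : Fin (N + 1)) :
      (mdel ((⊤ : SimpleGraph (Fin (N + 1))).lapMatrix ℝ) {y}).det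
        = ((N : ℝ) + 1) ^ (N - 1) := by
  classical
  have hcard : Fintype.card {a : Fin (N+1) // a ∉ ({y} : Finset (Fin (N+1)))} = N := by
    rw [Fintype.card_subtype_compl]
    simp
  have hne : ((N : ℝ) + 1) ≠ 0 := by positivity
  have hM : mdel ((⊤ : SimpleGraph (Fin (N + 1))).lapMatrix ℝ) {y}
      = ((N : ℝ) + 1) • (1 + replicateCol Unit (fun _ : {a : Fin (N+1) // a ∉ ({y} : Finset (Fin (N+1)))} => -(((N:ℝ)+1)⁻¹)) * replicateRow Unit (fun _ : {a : Fin (N+1) // a ∉ ({y} : Finset (Fin (N+1)))} => (1:ℝ))) := by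
    ext i j
    simp only [mdel, submatrix_apply, SimpleGraph.lapMatrix, SimpleGraph.degMatrix,
      Matrix.sub_apply, Matrix.smul_apply,
      Matrix.add_apply, Matrix.one_apply, Matrix.mul_apply, Finset.univ_unique,
      Finset.sum_singleton, Matrix.replicateCol_apply, Matrix.replicateRow_apply, smul_eq_mul,
      Matrix.diagonal_apply, SimpleGraph.adjMatrix_apply, SimpleGraph.top_adj]
    by_cases h : i = j
    · subst h
      rw [if_pos rfl, if_pos rfl, if_neg (by simp), SimpleGraph.complete_graph_degree]
      simp only [Fintype.card_fin]
      push_cast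
      field_simp
      ring
    · have hv : (i : Fin (N+1)) ≠ (j : Fin (N+1)) := fun hh => h (Subtype.ext hh)
      rw [if_neg hv, if_neg h, if_pos hv]
      field_simp
      ring
  rw [hM, det_smul, det_one_add_replicateCol_mul_replicateRow, hcard]
  have hdot : (fun _ : {a : Fin (N+1) // a ∉ ({y} : Finset (Fin (N+1)))} => (1:ℝ)) ⬝ᵥ (fun _ => -(((N:ℝ)+1)⁻¹)) = -(N * ((N:ℝ)+1)⁻¹) := by
    simp [dotProduct, Finset.card_univ, hcard]
  rw [hdot]
  have h1 : (1 : ℝ) + -(N * ((N:ℝ)+1)⁻¹) = ((N:ℝ)+1)⁻¹ := by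
    field_simp
    ring
  rw [h1]
  cases N with
  | zero => norm_num
  | succ m =>
    rw [pow_succ]
    have : (m : ℝ) + 1 + 1 ≠ 0 := by positivity
    push_cast
    field_simp

/-- Cayley's formula: the number of spanning trees of the complete graph on `N + 1`
vertices is `(N+1)^{N-1}`; equivalently, for the Laplacian `𝓛` of `K_{N+1}`,
`det(𝓛^{{y}}) = (N+1)^{N-1}` for every vertex `y`. -/
theorem stmt18 (N : ℕ) :
    Nat.card {H : (⊤ : SimpleGraph (Fin (N + 1))).Subgraph //
        H.IsSpanning ∧ H.spanningCoe.IsTree} = (N + 1) ^ (N - 1) ∧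
    ∀ y : Fin (N + 1),
      (mdel ((⊤ : SimpleGraph (Fin (N + 1))).lapMatrix ℝ) {y}).det
        = ((N : ℝ) + 1) ^ (N - 1) := by
  constructor
  · rw [CayleyAux.card_spanning]
    cases N with
    | zero =>
      simpa using CayleyAux.card_one
    | succ m =>
      have h2 : 2 ≤ Fintype.card (Fin (m + 1 + 1)) := by simp
      have h := CayleyAux.card_trees (Fin (m + 1 + 1)) h2
      rw [Fintype.card_fin] at h
      convert h using 2 <;> omega
  · exact detpart N
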